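/- Let d ≥ 1 and L ≥ 1 be integers and write n_j = 2^j − 1. For l = 1,…,L let I_{l→L} = I_{n_{L−1}} ⋯ I_{n_l} (with I_{L→L} the identity on ℝ^{n_L}). Then for every family of vectors u_l ∈ ℝ^{n_l^d} (l = 1,…,L), ‖Σ_{l=1}^{L} 2^{−l(2−d)/2} · I_{l→L}^{⊗d} u_l‖₂ ≤ 2^{dL/2} · (Σ_{l=1}^{L} ‖u_l‖₂²)^{1/2}. Equivalently, the modified BPX preconditioner F^d_L, whose l-th column block is 2^{−l(2−d)/2} I_{l→L}^{⊗d}, has spectral norm at most 2^{dL/2} = (1/h)^{d/2}, where h = 2^{−L} is the mesh spacing at level L. -/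

import Mathlib

open Finset

lemma sum_ite_le_aux {α : Type*} [Fintype α] (P : α → Prop) [DecidablePred P]
    (a : ℝ) (ha : 0 ≤ a) (h : ∀ x y, P x → P y → x = y) :
    ∑ x, (if P x then a else 0) ≤ a := by
  classical
  rw [Finset.sum_ite, Finset.sum_const, Finset.sum_const_zero, add_zero, nsmul_eq_mul]
  have hc : ((Finset.univ.filter P).card : ℝ) ≤ 1 := by
    have : (Finset.univ.filter P).card ≤ 1 := Finset.card_le_one.2 (by
      intro x hx y hy
      exact h x y (Finset.mem_filter.1 hx).2 (Finset.mem_filter.1 hy).2)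
    exact_mod_cast this
  calc ((Finset.univ.filter P).card : ℝ) * a ≤ 1 * a :=
        mul_le_mul_of_nonneg_right hc ha
    _ = a := one_mul a

section Imat
variable (j : ℕ) (A : Matrix (Fin (2 ^ (j + 1) - 1)) (Fin (2 ^ j - 1)) ℝ)
  (hA : ∀ r x, A r x = if r.val = 2 * x.val + 1 then 1
        else if r.val = 2 * x.val ∨ r.val = 2 * x.val + 2 then (1 / 2 : ℝ) else 0)

include hA

lemma I_nonneg : ∀ r x, 0 ≤ A r x := by
  intro r x; rw [hA]; split_ifs <;> norm_num

lemma I_row : ∀ r, ∑ x, A r x ≤ 1 := by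
  intro r
  rcases Nat.even_or_odd r.val with he | ho
  · obtain ⟨k, hk⟩ := he
    calc ∑ x, A r x
        ≤ ∑ x : Fin (2 ^ j - 1), ((if r.val = 2 * x.val then (1/2:ℝ) else 0)
          + (if r.val = 2 * x.val + 2 then (1/2:ℝ) else 0)) := by
          refine Finset.sum_le_sum fun x _ => ?_
          rw [hA]
          split_ifs <;> first | (exfalso; omega) | norm_num
      _ = (∑ x : Fin (2 ^ j - 1), if r.val = 2 * x.val then (1/2:ℝ) else 0)
          + ∑ x : Fin (2 ^ j - 1), if r.val = 2 * x.val + 2 then (1/2:ℝ) else 0 :=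
          Finset.sum_add_distrib
      _ ≤ 1/2 + 1/2 := by
          refine add_le_add ?_ ?_ <;>
            exact sum_ite_le_aux _ _ (by norm_num)
              (fun x y hx hy => Fin.ext (by omega))
      _ = 1 := by norm_num
  · obtain ⟨k, hk⟩ := ho
    calc ∑ x, A r x
        ≤ ∑ x : Fin (2 ^ j - 1), (if r.val = 2 * x.val + 1 then (1:ℝ) else 0) := by
          refine Finset.sum_le_sum fun x _ => ?_
          rw [hA]
          split_ifs <;> first | (exfalso; omega) | norm_num
      _ ≤ 1 := sum_ite_le_aux _ _ (by norm_num) (fun x y hx hy => Fin.ext (by omega))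

lemma I_col : ∀ x, ∑ r, A r x ≤ 2 := by
  intro x
  calc ∑ r, A r x
      ≤ ∑ r : Fin (2 ^ (j + 1) - 1), ((if r.val = 2 * x.val + 1 then (1:ℝ) else 0)
        + ((if r.val = 2 * x.val then (1/2:ℝ) else 0)
          + (if r.val = 2 * x.val + 2 then (1/2:ℝ) else 0))) := by
        refine Finset.sum_le_sum fun r _ => ?_
        rw [hA]
        split_ifs <;> first | (exfalso; omega) | norm_num
    _ ≤ 1 + (1/2 + 1/2) := by
        rw [Finset.sum_add_distrib, Finset.sum_add_distrib]
        refine add_le_add ?_ (add_le_add ?_ ?_) <;>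
          exact sum_ite_le_aux _ _ (by norm_num) (fun r s hr hs => Fin.ext (by omega))
    _ = 2 := by norm_num

end Imat

/-- Schur test. -/
lemma schur_test {m n : Type*} [Fintype m] [Fintype n] (A : Matrix m n ℝ)
    (h0 : ∀ f g, 0 ≤ A f g) {R C : ℝ} (hR0 : 0 ≤ R)
    (hR : ∀ f, ∑ g, A f g ≤ R) (hC : ∀ g, ∑ f, A f g ≤ C)
    (v : n → ℝ) : ∑ f, (A.mulVec v f) ^ 2 ≤ R * C * ∑ g, (v g) ^ 2 := by
  have key : ∀ f, (A.mulVec v f) ^ 2 ≤ R * ∑ g, A f g * (v g) ^ 2 := by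
    intro f
    have cs := Finset.sum_sq_le_sum_mul_sum_of_sq_eq_mul (Finset.univ (α := n))
      (r := fun g => A f g * v g) (f := fun g => A f g) (g := fun g => A f g * (v g) ^ 2)
      (fun g _ => h0 f g) (fun g _ => mul_nonneg (h0 f g) (sq_nonneg _))
      (fun g _ => by ring)
    have h1 : Matrix.mulVec A v f = ∑ g, A f g * v g := rfl
    rw [h1]
    refine cs.trans ?_
    have h2 : 0 ≤ ∑ g, A f g * (v g) ^ 2 :=
      Finset.sum_nonneg fun g _ => mul_nonneg (h0 f g) (sq_nonneg _)
    exact mul_le_mul_of_nonneg_right (hR f) h2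
  calc ∑ f, (A.mulVec v f) ^ 2 ≤ ∑ f, R * ∑ g, A f g * (v g) ^ 2 :=
        Finset.sum_le_sum fun f _ => key f
    _ = R * ∑ g, (∑ f, A f g) * (v g) ^ 2 := by
        rw [← Finset.mul_sum, Finset.sum_comm]
        congr 1
        refine Finset.sum_congr rfl fun g _ => ?_
        rw [Finset.sum_mul]
    _ ≤ R * ∑ g, C * (v g) ^ 2 := by
        refine mul_le_mul_of_nonneg_left (Finset.sum_le_sum fun g _ => ?_) hR0
        exact mul_le_mul_of_nonneg_right (hC g) (sq_nonneg _)
    _ = R * C * ∑ g, (v g) ^ 2 := by rw [← Finset.mul_sum, mul_assoc]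

/-- Row/column-sum bounds for a product of nonnegative matrices. -/
lemma mul_row_col {m p n : Type*} [Fintype m] [Fintype p] [Fintype n]
    (A : Matrix m p ℝ) (B : Matrix p n ℝ)
    (hA0 : ∀ f g, 0 ≤ A f g) (hB0 : ∀ f g, 0 ≤ B f g)
    {Ra Ca Rb Cb : ℝ} (hRb0 : 0 ≤ Rb) (hCa0 : 0 ≤ Ca)
    (hRa : ∀ f, ∑ g, A f g ≤ Ra) (hCa : ∀ g, ∑ f, A f g ≤ Ca)
    (hRb : ∀ f, ∑ g, B f g ≤ Rb) (hCb : ∀ g, ∑ f, B f g ≤ Cb) :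
    (∀ f g, 0 ≤ (A * B) f g) ∧ (∀ f, ∑ g, (A * B) f g ≤ Ra * Rb)
      ∧ (∀ g, ∑ f, (A * B) f g ≤ Ca * Cb) := by
  refine ⟨?_, ?_, ?_⟩
  · intro f g
    rw [Matrix.mul_apply]
    exact Finset.sum_nonneg fun h _ => mul_nonneg (hA0 f h) (hB0 h g)
  · intro f
    calc ∑ g, (A * B) f g = ∑ h, A f h * ∑ g, B h g := by
          simp_rw [Matrix.mul_apply, Finset.mul_sum]
          rw [Finset.sum_comm]
      _ ≤ ∑ h, A f h * Rb :=
          Finset.sum_le_sum fun h _ => mul_le_mul_of_nonneg_left (hRb h) (hA0 f h)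
      _ = (∑ h, A f h) * Rb := by rw [Finset.sum_mul]
      _ ≤ Ra * Rb := mul_le_mul_of_nonneg_right (hRa f) hRb0
  · intro g
    calc ∑ f, (A * B) f g = ∑ h, (∑ f, A f h) * B h g := by
          simp_rw [Matrix.mul_apply, Finset.sum_mul]
          rw [Finset.sum_comm]
      _ ≤ ∑ h, Ca * B h g :=
          Finset.sum_le_sum fun h _ =>
            mul_le_mul_of_nonneg_right (hCa h) (hB0 h g)
      _ = Ca * ∑ h, B h g := by rw [Finset.mul_sum]
      _ ≤ Ca * Cb := mul_le_mul_of_nonneg_left (hCb g) hCa0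

/-- Row sums of a Kronecker power. -/
lemma kron_sum {d : ℕ} {α β : Type*} [Fintype α] [Fintype β]
    (M : Matrix α β ℝ) (f : Fin d → α) :
    ∑ g : Fin d → β, ∏ t, M (f t) (g t) = ∏ t, ∑ y, M (f t) y := by
  rw [Finset.prod_univ_sum]
  simp [Fintype.piFinset_univ]

/-- ℓ² triangle inequality for finite sums of vectors. -/
lemma sqrt_sum_sq_sum_le {ι α : Type*} [Fintype α] (s : Finset ι) (v : ι → α → ℝ) :
    Real.sqrt (∑ f, ((∑ l ∈ s, v l) f) ^ 2) ≤ ∑ l ∈ s, Real.sqrt (∑ f, (v l f) ^ 2) := by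
  have h : ∀ x : α → ℝ, Real.sqrt (∑ f, (x f) ^ 2)
      = ‖(WithLp.equiv 2 (α → ℝ)).symm x‖ := by
    intro x
    rw [EuclideanSpace.norm_eq]
    congr 1
    refine Finset.sum_congr rfl fun i _ => ?_
    simp [Real.norm_eq_abs, sq_abs]
  rw [h]
  calc ‖(WithLp.equiv 2 (α → ℝ)).symm (∑ l ∈ s, v l)‖
      = ‖∑ l ∈ s, (WithLp.equiv 2 (α → ℝ)).symm (v l)‖ := by
        simp only [WithLp.equiv_symm_apply, WithLp.toLp_sum]
    _ ≤ ∑ l ∈ s, ‖(WithLp.equiv 2 (α → ℝ)).symm (v l)‖ := norm_sum_le s _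
    _ = ∑ l ∈ s, Real.sqrt (∑ f, (v l f) ^ 2) := by
        refine Finset.sum_congr rfl fun l _ => (h (v l)).symm

/-- Geometric tail bound. -/
lemma geo_le : ∀ L : ℕ, ∑ l ∈ Finset.Icc 1 L, (1/4 : ℝ) ^ l ≤ 1 - (1/4 : ℝ) ^ L := by
  intro L
  induction L with
  | zero => simp
  | succ L ih =>
    rw [Finset.sum_Icc_succ_top (by omega)]
    have h4 : (0:ℝ) ≤ (1/4:ℝ) ^ L := by positivity
    rw [pow_succ]
    nlinarith

/-- **Spectral norm of the modified BPX preconditioner.** With `n_j = 2^j − 1`,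
`I j` the one-level 1D interpolation matrix, `J j = I (L−1) ⋯ I j` the composed
interpolation from level `j` to level `L` (with `J L` the identity), and
`K l` the `d`-fold Kronecker power of `J l` (as a matrix on functions
`Fin d → Fin n_L`), the modified BPX preconditioner `F^d_L`, whose `l`-th column
block is `2^{−l(2−d)/2}·(J l)^{⊗d}`, has spectral norm at most `2^{dL/2}`:
for every family of vectors `u l ∈ ℝ^{n_l^d}` (`l = 1,…,L`),
`‖Σ_{l=1}^L 2^{−l(2−d)/2} (K l) (u l)‖₂ ≤ 2^{dL/2}·(Σ_{l=1}^L ‖u l‖₂²)^{1/2}`. -/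
theorem stmt12 (L d : ℕ) (hL : 1 ≤ L) (hd : 1 ≤ d)
    (I : ∀ j : ℕ, Matrix (Fin (2 ^ (j + 1) - 1)) (Fin (2 ^ j - 1)) ℝ)
    (hI : ∀ (j : ℕ) (r : Fin (2 ^ (j + 1) - 1)) (x : Fin (2 ^ j - 1)),
      I j r x = if r.val = 2 * x.val + 1 then 1
        else if r.val = 2 * x.val ∨ r.val = 2 * x.val + 2 then (1 / 2 : ℝ) else 0)
    (J : ∀ j : ℕ, Matrix (Fin (2 ^ L - 1)) (Fin (2 ^ j - 1)) ℝ)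
    (hJL : J L = 1)
    (hJ : ∀ j, j < L → J j = J (j + 1) * I j)
    (K : ∀ j : ℕ, Matrix (Fin d → Fin (2 ^ L - 1)) (Fin d → Fin (2 ^ j - 1)) ℝ)
    (hK : ∀ (j : ℕ) (f : Fin d → Fin (2 ^ L - 1)) (g : Fin d → Fin (2 ^ j - 1)),
      K j f g = ∏ t, J j (f t) (g t))
    (u : ∀ j : ℕ, (Fin d → Fin (2 ^ j - 1)) → ℝ) :
    Real.sqrt (∑ f,
        ((∑ l ∈ Finset.Icc 1 L,
          (2 : ℝ) ^ (-((l : ℝ) * (2 - (d : ℝ))) / 2) • (K l).mulVec (u l)) f) ^ 2) ≤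
      (2 : ℝ) ^ (((d : ℝ) * (L : ℝ)) / 2) *
        Real.sqrt (∑ l ∈ Finset.Icc 1 L, ∑ g, (u l g) ^ 2) := by
  -- bounds on J by downward induction
  have Jbd : ∀ k j, j + k = L → (∀ f g, 0 ≤ J j f g) ∧ (∀ f, ∑ g, J j f g ≤ 1)
      ∧ (∀ g, ∑ f, J j f g ≤ (2:ℝ) ^ k) := by
    intro k
    induction k with
    | zero =>
      intro j hj
      have : j = L := by omega
      subst this
      rw [hJL]
      refine ⟨?_, ?_, ?_⟩
      · intro f g; rw [Matrix.one_apply]; split_ifs <;> norm_num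
      · intro f; simp [Matrix.one_apply]
      · intro g; simp [Matrix.one_apply]
    | succ k ih =>
      intro j hj
      have hjL : j < L := by omega
      have IH := ih (j + 1) (by omega)
      rw [hJ j hjL]
      have h := mul_row_col (J (j + 1)) (I j) IH.1 (I_nonneg j (I j) (hI j))
        (by norm_num) (by positivity) IH.2.1 IH.2.2 (I_row j (I j) (hI j))
        (I_col j (I j) (hI j))
      refine ⟨h.1, ?_, ?_⟩
      · intro f; simpa using h.2.1 f
      · intro g
        refine (h.2.2 g).trans (le_of_eq ?_)
        rw [pow_succ]
  -- bounds at a given level l ≤ L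
  have Jfacts : ∀ l, l ≤ L → (∀ f g, 0 ≤ J l f g) ∧ (∀ f, ∑ g, J l f g ≤ 1)
      ∧ (∀ g, ∑ f, J l f g ≤ (2:ℝ) ^ (L - l)) := by
    intro l hl
    exact Jbd (L - l) l (by omega)
  -- Schur bound for each K l
  have Kbd : ∀ l, l ≤ L → ∑ f, ((K l).mulVec (u l) f) ^ 2
      ≤ (2:ℝ) ^ ((L - l) * d) * ∑ g, (u l g) ^ 2 := by
    intro l hl
    obtain ⟨h0, hrow, hcol⟩ := Jfacts l hl
    have K0 : ∀ f g, 0 ≤ K l f g := by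
      intro f g; rw [hK]
      exact Finset.prod_nonneg fun t _ => h0 _ _
    have Krow : ∀ f, ∑ g, K l f g ≤ 1 := by
      intro f
      have : ∑ g, K l f g = ∏ t, ∑ y, J l (f t) y := by
        rw [← kron_sum (J l) f]
        exact Finset.sum_congr rfl fun g _ => hK l f g
      rw [this]
      exact Finset.prod_le_one (fun t _ => Finset.sum_nonneg fun y _ => h0 _ _)
        (fun t _ => hrow _)
    have Kcol : ∀ g, ∑ f, K l f g ≤ (2:ℝ) ^ ((L - l) * d) := by
      intro g
      have : ∑ f, K l f g = ∏ t, ∑ y, J l y (g t) := by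
        rw [← kron_sum (fun a b => J l b a) g]
        exact Finset.sum_congr rfl fun f _ => hK l f g
      rw [this]
      calc ∏ t, ∑ y, J l y (g t) ≤ ∏ t : Fin d, (2:ℝ) ^ (L - l) := by
            refine Finset.prod_le_prod (fun t _ => Finset.sum_nonneg fun y _ => h0 _ _)
              (fun t _ => hcol _)
        _ = (2:ℝ) ^ ((L - l) * d) := by
            rw [Finset.prod_const, pow_mul]
            simp
    have := schur_test (K l) K0 (by norm_num) Krow Kcol (u l)
    simpa using this
  -- notation
  set a : ℕ → ℝ := fun l => (2 : ℝ) ^ (-((l : ℝ) * (2 - (d : ℝ))) / 2) with ha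
  have ha_pos : ∀ l, 0 < a l := fun l => Real.rpow_pos_of_pos (by norm_num) _
  set w : ∀ l : ℕ, (Fin d → Fin (2 ^ L - 1)) → ℝ := fun l => (K l).mulVec (u l) with hw
  set M : ℕ → ℝ := fun l => Real.sqrt (∑ g, (u l g) ^ 2) with hM
  have hM0 : ∀ l, 0 ≤ M l := fun l => Real.sqrt_nonneg _
  set b : ℕ → ℝ := fun l => Real.sqrt ((2:ℝ) ^ ((L - l) * d)) with hb
  have hb0 : ∀ l, 0 ≤ b l := fun l => Real.sqrt_nonneg _
  -- triangle inequality
  have step1 : Real.sqrt (∑ f, ((∑ l ∈ Finset.Icc 1 L, a l • w l) f) ^ 2)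
      ≤ ∑ l ∈ Finset.Icc 1 L, Real.sqrt (∑ f, ((a l • w l) f) ^ 2) :=
    sqrt_sum_sq_sum_le _ _
  have step2 : ∀ l, Real.sqrt (∑ f, ((a l • w l) f) ^ 2)
      = a l * Real.sqrt (∑ f, (w l f) ^ 2) := by
    intro l
    have h1 : ∑ f, ((a l • w l) f) ^ 2 = (a l) ^ 2 * ∑ f, (w l f) ^ 2 := by
      rw [Finset.mul_sum]
      refine Finset.sum_congr rfl fun f _ => ?_
      simp [Pi.smul_apply, smul_eq_mul, mul_pow]
    rw [h1, Real.sqrt_mul (sq_nonneg _), Real.sqrt_sq (ha_pos l).le]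
  have step3 : ∀ l ∈ Finset.Icc 1 L, Real.sqrt (∑ f, (w l f) ^ 2) ≤ b l * M l := by
    intro l hl
    rw [Finset.mem_Icc] at hl
    have := Kbd l hl.2
    calc Real.sqrt (∑ f, (w l f) ^ 2)
        ≤ Real.sqrt ((2:ℝ) ^ ((L - l) * d) * ∑ g, (u l g) ^ 2) := Real.sqrt_le_sqrt this
      _ = b l * M l := Real.sqrt_mul (by positivity) _
  have step4 : Real.sqrt (∑ f, ((∑ l ∈ Finset.Icc 1 L, a l • w l) f) ^ 2)
      ≤ ∑ l ∈ Finset.Icc 1 L, (a l * b l) * M l := by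
    refine step1.trans (Finset.sum_le_sum fun l hl => ?_)
    rw [step2 l, mul_assoc]
    exact mul_le_mul_of_nonneg_left (step3 l hl) (ha_pos l).le
  -- Cauchy–Schwarz over levels
  have cs := Finset.sum_mul_sq_le_sq_mul_sq (Finset.Icc 1 L)
    (fun l => a l * b l) M
  have hMsq : ∑ l ∈ Finset.Icc 1 L, (M l) ^ 2 = ∑ l ∈ Finset.Icc 1 L, ∑ g, (u l g) ^ 2 := by
    refine Finset.sum_congr rfl fun l _ => ?_
    exact Real.sq_sqrt (Finset.sum_nonneg fun g _ => sq_nonneg _)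
  -- the weight sum is at most 2^(dL)
  have hweight : ∑ l ∈ Finset.Icc 1 L, (a l * b l) ^ 2 ≤ (2:ℝ) ^ ((d:ℝ) * L) := by
    have hterm : ∀ l ∈ Finset.Icc 1 L, (a l * b l) ^ 2
        = (2:ℝ) ^ ((d:ℝ) * L) * (1/4:ℝ) ^ l := by
      intro l hl
      rw [Finset.mem_Icc] at hl
      have hasq : a l ^ 2 = (2:ℝ) ^ (-((l : ℝ) * (2 - (d : ℝ)))) := by
        rw [ha, sq, ← Real.rpow_add (by norm_num : (0:ℝ) < 2)]
        congr 1; ring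
      have hbsq : b l ^ 2 = (2:ℝ) ^ ((((L - l) * d : ℕ)) : ℝ) := by
        rw [hb, Real.sq_sqrt (by positivity), Real.rpow_natCast]
      have hcast : ((((L - l) * d : ℕ)) : ℝ) = ((L:ℝ) - l) * d := by
        push_cast [Nat.cast_sub hl.2]
        ring
      have hquarter : (2:ℝ) ^ (-(2:ℝ) * l) = (1/4:ℝ) ^ l := by
        rw [Real.rpow_mul (by norm_num : (0:ℝ) ≤ 2), Real.rpow_natCast]
        congr 1
        rw [show (-2:ℝ) = ((-2 : ℤ) : ℝ) by norm_num, Real.rpow_intCast]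
        norm_num
      calc (a l * b l) ^ 2 = a l ^ 2 * b l ^ 2 := by ring
        _ = (2:ℝ) ^ (-((l : ℝ) * (2 - (d : ℝ))) + ((L:ℝ) - l) * d) := by
            rw [hasq, hbsq, hcast, ← Real.rpow_add (by norm_num : (0:ℝ) < 2)]
        _ = (2:ℝ) ^ ((d:ℝ) * L + (-(2:ℝ) * l)) := by
            congr 1; ring
        _ = (2:ℝ) ^ ((d:ℝ) * L) * (1/4:ℝ) ^ l := by
            rw [Real.rpow_add (by norm_num : (0:ℝ) < 2), hquarter]
    rw [Finset.sum_congr rfl hterm, ← Finset.mul_sum]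
    have hgeo := geo_le L
    have h4L : (0:ℝ) ≤ (1/4:ℝ) ^ L := by positivity
    have hp : (0:ℝ) < (2:ℝ) ^ ((d:ℝ) * L) := Real.rpow_pos_of_pos (by norm_num) _
    nlinarith [hp.le]
  -- finish
  refine step4.trans ?_
  have hsum_nonneg : 0 ≤ ∑ l ∈ Finset.Icc 1 L, (a l * b l) * M l :=
    Finset.sum_nonneg fun l _ =>
      mul_nonneg (mul_nonneg (ha_pos l).le (hb0 l)) (hM0 l)
  have hsq : (∑ l ∈ Finset.Icc 1 L, (a l * b l) * M l) ^ 2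
      ≤ (2:ℝ) ^ ((d:ℝ) * L) * ∑ l ∈ Finset.Icc 1 L, ∑ g, (u l g) ^ 2 := by
    refine cs.trans ?_
    rw [hMsq]
    refine mul_le_mul_of_nonneg_right hweight
      (Finset.sum_nonneg fun l _ => Finset.sum_nonneg fun g _ => sq_nonneg _)
  have hfinal : ∑ l ∈ Finset.Icc 1 L, (a l * b l) * M l
      ≤ Real.sqrt ((2:ℝ) ^ ((d:ℝ) * L) * ∑ l ∈ Finset.Icc 1 L, ∑ g, (u l g) ^ 2) := by
    calc ∑ l ∈ Finset.Icc 1 L, (a l * b l) * M l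
        = Real.sqrt ((∑ l ∈ Finset.Icc 1 L, (a l * b l) * M l) ^ 2) :=
          (Real.sqrt_sq hsum_nonneg).symm
      _ ≤ _ := Real.sqrt_le_sqrt hsq
  refine hfinal.trans (le_of_eq ?_)
  rw [Real.sqrt_mul (Real.rpow_nonneg (by norm_num) _)]
  congr 1
  have : (2:ℝ) ^ ((d:ℝ) * L) = ((2:ℝ) ^ (((d:ℝ) * L) / 2)) ^ 2 := by
    rw [sq, ← Real.rpow_add (by norm_num : (0:ℝ) < 2)]
    congr 1; ring
  rw [this, Real.sqrt_sq (Real.rpow_nonneg (by norm_num) _)]
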